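/- For the discounted problem with discount factor 0 ≤ β < 1: if u : S → ℝ is bounded and satisfies u(s) ≥ ∫ (r(s,a,s') + β u(s')) dq(s'|s,a) for all s, a, then I_β(π)(s) ≤ u(s) for every plan π and state s. -/
import Mathlib


open MeasureTheory

/-- Finite-horizon expected β-discounted return of a (history-dependent, randomized) plan
`π : List S → Measure A` given the history `h` (most recent state first). -/
noncomputable def finValDisc {S A : Type*} [MeasurableSpace S] [MeasurableSpace A] [Inhabited S]
    (q : S → A → Measure S) (r : S → A → S → ℝ) (β : ℝ)
    (π : List S → Measure A) : ℕ → List S → ℝ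
  | 0, _ => 0
  | n + 1, h =>
      ∫ a, ∫ y, (r h.headI a y + β * finValDisc q r β π n (y :: h)) ∂(q h.headI a) ∂(π h)

/-- Total expected β-discounted return `I_β(π)(s)`; for nonnegative rewards it is the
supremum of the finite-horizon discounted returns. -/
noncomputable def discReturn {S A : Type*} [MeasurableSpace S] [MeasurableSpace A] [Inhabited S]
    (q : S → A → Measure S) (r : S → A → S → ℝ) (β : ℝ)
    (π : List S → Measure A) (s : S) : ℝ :=
  ⨆ n : ℕ, finValDisc q r β π n [s]

/-- Result (II) of Blackwell's discounted paper: a bounded `β`-excessive function `u`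
is an upper bound on the discounted income of every plan. -/
theorem discounted_excessive_bounds_income {S A : Type*}
    [MeasurableSpace S] [MeasurableSpace A] [Inhabited S]
    (q : S → A → Measure S) (hq : ∀ s a, IsProbabilityMeasure (q s a))
    (r : S → A → S → ℝ) (M : ℝ) (hr0 : ∀ s a y, 0 ≤ r s a y) (hrM : ∀ s a y, r s a y ≤ M)
    (hrm : ∀ s a, Measurable (r s a))
    (β : ℝ) (hβ0 : 0 ≤ β) (hβ1 : β < 1)
    (u : S → ℝ) (C : ℝ) (huC : ∀ s, |u s| ≤ C) (hum : Measurable u)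
    (hexc : ∀ s a, ∫ y, (r s a y + β * u y) ∂(q s a) ≤ u s) :
    ∀ (π : List S → Measure A), (∀ h, IsProbabilityMeasure (π h)) →
      ∀ s : S, discReturn q r β π s ≤ u s := by
  intro π hπ s
  -- A is nonempty since π [] is a probability measure
  have hA : Nonempty A := by
    by_contra h
    have h1 : (π []) Set.univ = 1 := (hπ []).measure_univ
    rw [Set.univ_eq_empty_iff.mpr (not_nonempty_iff.mp h)] at h1
    simp at h1
  obtain ⟨a₀⟩ := hA
  have hBdd : BddBelow (Set.range u) := by
    refine ⟨-C, ?_⟩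
    rintro _ ⟨t, rfl⟩
    linarith [(abs_le.mp (huC t)).1]
  set m := sInf (Set.range u) with hm
  have hmle : ∀ t, m ≤ u t := fun t => csInf_le hBdd ⟨t, rfl⟩
  -- the comparison integrand is integrable
  have hint_ru : ∀ s a, Integrable (fun y => r s a y + β * u y) (q s a) := by
    intro s a
    haveI := hq s a
    refine ⟨((hrm s a).add (hum.const_mul β)).aestronglyMeasurable, ?_⟩
    apply MeasureTheory.HasFiniteIntegral.of_bounded (C := M + |β| * C)
    filter_upwards with y
    rw [Real.norm_eq_abs]
    have h2 : |β * u y| ≤ |β| * C := by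
      rw [abs_mul]
      exact mul_le_mul_of_nonneg_left (huC y) (abs_nonneg β)
    calc |r s a y + β * u y| ≤ |r s a y| + |β * u y| := abs_add_le _ _
      _ ≤ M + |β| * C := by
          have h1 : |r s a y| = r s a y := abs_of_nonneg (hr0 s a y)
          linarith [hrM s a y]
  -- u is nonnegative
  have hu0 : ∀ t, 0 ≤ u t := by
    have hβm : ∀ t, β * m ≤ u t := by
      intro t
      have h1 : β * m ≤ ∫ y, (r t a₀ y + β * u y) ∂(q t a₀) := by
        haveI := hq t a₀
        have h2 := integral_mono (μ := q t a₀) (integrable_const (β * m)) (hint_ru t a₀)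
          (fun y => by nlinarith [hmle y, hr0 t a₀ y])
        simpa using h2
      exact h1.trans (hexc t a₀)
    have hmm : β * m ≤ m := le_csInf ⟨u s, ⟨s, rfl⟩⟩ (by rintro _ ⟨t, rfl⟩; exact hβm t)
    have hm0 : 0 ≤ m := by nlinarith
    intro t; linarith [hmle t]
  -- main induction: every finite-horizon value is at most u applied to the current state
  have key : ∀ n h, finValDisc q r β π n h ≤ u h.headI := by
    intro n
    induction n with
    | zero => intro h; simpa [finValDisc] using hu0 h.headI
    | succ n ih =>
      intro h
      have inner : ∀ a,
          (∫ y, (r h.headI a y + β * finValDisc q r β π n (y :: h)) ∂(q h.headI a)) ≤ u h.headI := by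
        intro a
        by_cases hI : Integrable
            (fun y => r h.headI a y + β * finValDisc q r β π n (y :: h)) (q h.headI a)
        · calc (∫ y, (r h.headI a y + β * finValDisc q r β π n (y :: h)) ∂(q h.headI a))
              ≤ ∫ y, (r h.headI a y + β * u y) ∂(q h.headI a) := by
                refine integral_mono hI (hint_ru _ a) (fun y => ?_)
                have h3 := ih (y :: h)
                simp only [List.headI] at h3
                nlinarith
            _ ≤ u h.headI := hexc _ a
        · rw [integral_undef hI]; exact hu0 _
      show (∫ a, ∫ y, (r h.headI a y + β * finValDisc q r β π n (y :: h)) ∂(q h.headI a) ∂(π h))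
          ≤ u h.headI
      by_cases hO : Integrable
          (fun a => ∫ y, (r h.headI a y + β * finValDisc q r β π n (y :: h)) ∂(q h.headI a)) (π h)
      · haveI := hπ h
        calc (∫ a, ∫ y, (r h.headI a y + β * finValDisc q r β π n (y :: h)) ∂(q h.headI a) ∂(π h))
            ≤ ∫ _a, u h.headI ∂(π h) := integral_mono hO (integrable_const _) inner
          _ = u h.headI := by simp
      · rw [integral_undef hO]; exact hu0 _
  rw [discReturn]
  exact ciSup_le fun n => by simpa using key n [s]
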